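/- Let R be the set of n-tuples in (ℝ≥0)ⁿ in which any zero coordinate forces all coordinates to be zero, with componentwise addition and multiplication, ordered by r ≤* s iff r = s or r_i < s_i for all i. Then R is a cancellative, difference-ordered, division positive ordered semiring. -/

import Mathlib

open scoped NNReal

/-- The set of `n`-tuples of nonnegative reals in which any zero coordinate
forces all coordinates to be zero. -/
def R (n : ℕ) : Set (Fin n → ℝ≥0) :=
  {r | (∃ i, r i = 0) → ∀ j, r j = 0}

/-- The order `r ≤* s` iff `r = s` or `r i < s i` for all `i`. -/
def leStar {n : ℕ} (r s : Fin n → ℝ≥0) : Prop :=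
  r = s ∨ ∀ i, r i < s i

/-- `R` with componentwise operations and the order `≤*` is a cancellative,
difference-ordered, division positive ordered semiring. -/
theorem stmt_16 (n : ℕ) :
    -- partial order
    (∀ r, leStar (n := n) r r) ∧
    (∀ r s : Fin n → ℝ≥0, leStar r s → leStar s r → r = s) ∧
    (∀ r s t : Fin n → ℝ≥0, leStar r s → leStar s t → leStar r t) ∧
    -- `R` contains `0` and `1` and is closed under the operations
    (0 : Fin n → ℝ≥0) ∈ R n ∧ (1 : Fin n → ℝ≥0) ∈ R n ∧
    (∀ r ∈ R n, ∀ s ∈ R n, r + s ∈ R n) ∧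
    (∀ r ∈ R n, ∀ s ∈ R n, r * s ∈ R n) ∧
    -- `0` is the bottom element
    (∀ r ∈ R n, leStar 0 r) ∧
    -- monotonicity of addition and multiplication
    (∀ r s t : Fin n → ℝ≥0, leStar s t → leStar (r + s) (r + t)) ∧
    (∀ r s t u : Fin n → ℝ≥0, r ∈ R n → s ∈ R n → t ∈ R n → u ∈ R n →
      leStar r s → leStar t u → leStar (r * t) (s * u)) ∧
    -- cancellativity
    (∀ r s t : Fin n → ℝ≥0, leStar (r + s) (r + t) → leStar s t) ∧
    -- difference-orderedness
    (∀ r ∈ R n, ∀ s ∈ R n, leStar r s → ∃ t ∈ R n, r + t = s) ∧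
    -- division
    (∀ r ∈ R n, r ≠ 0 → ∃ s ∈ R n, r * s = 1 ∧ s * r = 1) := by
  
  refine ⟨?_, ?_, ?_, ?_, ?_, ?_, ?_, ?_, ?_, ?_, ?_, ?_, ?_⟩
  · intro r; exact Or.inl rfl
  · rintro r s (rfl | h1) (h2 | h2)
    · rfl
    · rfl
    · exact h2.symm
    · exact funext fun i => absurd (h2 i) (lt_asymm (h1 i))
  · rintro r s t (rfl | h1) (rfl | h2)
    · exact Or.inl rfl
    · exact Or.inr h2
    · exact Or.inr h1
    · exact Or.inr fun i => (h1 i).trans (h2 i)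
  · intro _ j; rfl
  · rintro ⟨i, hi⟩; exact absurd hi one_ne_zero
  · intro r hr s hs ⟨i, hi⟩ j
    have := add_eq_zero.mp hi
    simp [Pi.add_apply] at *
    exact ⟨hr ⟨i, this.1⟩ j, hs ⟨i, this.2⟩ j⟩
  · intro r hr s hs ⟨i, hi⟩ j
    rcases mul_eq_zero.mp hi with h | h
    · simp [Pi.mul_apply, hr ⟨i, h⟩ j]
    · simp [Pi.mul_apply, hs ⟨i, h⟩ j]
  · intro r hr
    by_cases h : ∃ i, r i = 0
    · left; funext j; exact (hr h j).symm
    · right; intro i; exact zero_lt_iff.mpr fun hz => h ⟨i, hz⟩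
  · rintro r s t (rfl | h)
    · exact Or.inl rfl
    · exact Or.inr fun i => show r i + s i < r i + t i from add_lt_add_of_le_of_lt le_rfl (h i)
  · rintro r s t u hr hs ht hu (rfl | h1) (rfl | h2)
    · exact Or.inl rfl
    · by_cases hz : ∃ i, r i = 0
      · left; funext j; simp [Pi.mul_apply, hr hz j]
      · exact Or.inr fun i =>
          mul_lt_mul_of_pos_left (h2 i) (zero_lt_iff.mpr fun h => hz ⟨i, h⟩)
    · by_cases hz : ∃ i, t i = 0
      · left; funext j; simp [Pi.mul_apply, ht hz j]
      · exact Or.inr fun i =>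
          mul_lt_mul_of_pos_right (h1 i) (zero_lt_iff.mpr fun h => hz ⟨i, h⟩)
    · right; intro i
      exact mul_lt_mul'' (h1 i) (h2 i) zero_le zero_le
  · rintro r s t (h | h)
    · left; funext i
      have := congrFun h i
      simpa [Pi.add_apply] using add_left_cancel this
    · right; intro i
      exact lt_of_add_lt_add_left (h i)
  · rintro r hr s hs (rfl | h)
    · exact ⟨0, fun ⟨_, _⟩ j => rfl, add_zero r⟩
    · refine ⟨fun i => s i - r i, ?_, ?_⟩
      · rintro ⟨i, hi⟩ j
        exact absurd hi (tsub_pos_of_lt (h i)).ne'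
      · funext i
        exact add_tsub_cancel_of_le (h i).le
  · intro r hr hne
    have hex : ∃ i, r i ≠ 0 := by
      by_contra h
      push_neg at h
      exact hne (funext fun i => h i)
    have hall : ∀ i, r i ≠ 0 := fun i hz => hex.elim fun j hj => hj (hr ⟨i, hz⟩ j)
    refine ⟨fun i => (r i)⁻¹, ?_, ?_, ?_⟩
    · rintro ⟨i, hi⟩ j
      exact absurd hi (inv_ne_zero (hall i))
    · funext i; exact mul_inv_cancel₀ (hall i)
    · funext i; exact inv_mul_cancel₀ (hall i)
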